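/- Let d ≥ 1 and let M : ℝ → Matrix (Fin d) (Fin d) ℝ be continuous on [0, ∞) with nonnegative off-diagonal entries there, i.e. (M t) k ℓ ≥ 0 for all t ≥ 0 and all k ≠ ℓ. Let y : ℝ → (Fin d → ℝ) satisfy HasDerivAt y (M t *ᵥ y t) t for every t ≥ 0. If y 0 ⪰ 0, then y t ⪰ 0 for every t ≥ 0. -/

import Mathlib

open Matrix Metric Set

/-- Positivity-preservation half of Proposition 1: if `M` is continuous on `[0, ∞)`
with nonnegative off-diagonal entries there, then solutions of `y' = M t *ᵥ y` with
nonnegative initial data stay nonnegative. -/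
theorem positivity_preservation
    {d : ℕ} (hd : 1 ≤ d)
    (M : ℝ → Matrix (Fin d) (Fin d) ℝ)
    (hMc : ContinuousOn M (Set.Ici (0 : ℝ)))
    (hMoff : ∀ t : ℝ, 0 ≤ t → ∀ k ℓ : Fin d, k ≠ ℓ → 0 ≤ M t k ℓ)
    (y : ℝ → (Fin d → ℝ))
    (hy : ∀ t : ℝ, 0 ≤ t → HasDerivAt y (M t *ᵥ y t) t)
    (hy0 : ∀ i : Fin d, 0 ≤ y 0 i) :
    ∀ t : ℝ, 0 ≤ t → ∀ i : Fin d, 0 ≤ y t i := by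
  -- the nonnegative cone
  set K : Set (Fin d → ℝ) := {v | ∀ i, 0 ≤ v i} with hKdef
  have hKclosed : IsClosed K := by
    have : K = ⋂ i : Fin d, {v : Fin d → ℝ | 0 ≤ v i} := by
      ext v; simp [hKdef]
    rw [this]
    exact isClosed_iInter fun i => isClosed_le continuous_const (continuous_apply i)
  have hKne : K.Nonempty := ⟨0, fun i => le_refl 0⟩
  -- the projection onto K and its properties
  set P : (Fin d → ℝ) → (Fin d → ℝ) := fun x i => max (x i) 0 with hPdef
  have hPK : ∀ x, P x ∈ K := fun x i => le_max_right _ _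
  have hPdist : ∀ x, infDist x K = ‖x - P x‖ := by
    intro x
    refine le_antisymm ((infDist_le_dist_of_mem (hPK x)).trans_eq (dist_eq_norm _ _)) ?_
    by_contra hcon
    push_neg at hcon
    obtain ⟨q, hq, hdq⟩ := (infDist_lt_iff hKne).1 hcon
    have hle : ‖x - P x‖ ≤ dist x q := by
      rw [dist_eq_norm]
      refine pi_norm_le_iff_of_nonneg (norm_nonneg _) |>.2 fun i => ?_
      have h1 : ‖(x - P x) i‖ ≤ ‖(x - q) i‖ := by
        simp only [Pi.sub_apply, hPdef, Real.norm_eq_abs]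
        rcases le_or_gt 0 (x i) with h | h
        · simp [max_eq_left h]
        · rw [max_eq_right h.le]
          have hqi := hq i
          rw [abs_of_nonpos (by linarith), abs_of_nonpos (by linarith)]
          linarith
      exact h1.trans (norm_le_pi_norm (x - q) i)
    exact absurd hdq (not_lt.2 hle)
  -- the matrix as a continuous linear map
  set Φ : Matrix (Fin d) (Fin d) ℝ → ((Fin d → ℝ) →L[ℝ] (Fin d → ℝ)) :=
    fun A => LinearMap.toContinuousLinearMap (Matrix.mulVecLin A) with hΦdef
  have hΦapp : ∀ A v, Φ A v = A *ᵥ v := fun A v => rfl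
  have hΦcont : Continuous Φ := by
    have : IsLinearMap ℝ Φ := by
      constructor
      · intro A B; ext v : 1; simp [hΦapp, Matrix.add_mulVec]
      · intro c A; ext v : 1; simp [hΦapp, Matrix.smul_mulVec]
    exact (this.mk' Φ).continuous_of_finiteDimensional
  -- diagonal entries are bounded by the operator norm
  have hdiag : ∀ (A : Matrix (Fin d) (Fin d) ℝ) i, |A i i| ≤ ‖Φ A‖ := by
    intro A i
    have h1 : (Φ A (Pi.single i 1)) i = A i i := by
      simp [hΦapp, Matrix.mulVec_single]
    calc |A i i| = ‖(Φ A (Pi.single i 1)) i‖ := by rw [h1]; rfl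
      _ ≤ ‖Φ A (Pi.single i 1)‖ := norm_le_pi_norm _ i
      _ ≤ ‖Φ A‖ * ‖(Pi.single i 1 : Fin d → ℝ)‖ := (Φ A).le_opNorm _
      _ = ‖Φ A‖ := by rw [Pi.norm_single]; simp
  -- main argument on [0, T]
  intro T hT
  -- bound on the operator norm on [0, T]
  obtain ⟨C, hC⟩ : ∃ C, ∀ s ∈ Icc (0:ℝ) T, ‖Φ (M s)‖ ≤ C := by
    obtain ⟨C, hC⟩ := (isCompact_Icc (a := (0:ℝ)) (b := T)).exists_bound_of_continuousOn
      ((hΦcont.comp_continuousOn (hMc.mono Icc_subset_Ici_self)))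
    exact ⟨C, fun s hs => hC s hs⟩
  set L : ℝ := max C 0 with hLdef
  have hL0 : 0 ≤ L := le_max_right _ _
  have hCL : ∀ s ∈ Icc (0:ℝ) T, ‖Φ (M s)‖ ≤ L := fun s hs => (hC s hs).trans (le_max_left _ _)
  -- the scalar function
  set f : ℝ → ℝ := fun t => infDist (y t) K with hfdef
  have hycont : ∀ s ∈ Icc (0:ℝ) T, ContinuousAt y s := fun s hs => (hy s hs.1).continuousAt
  have hfcont : ContinuousOn f (Icc 0 T) := fun s hs =>
    ((continuous_infDist_pt K).continuousAt.comp (hycont s hs)).continuousWithinAt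
  have hf0 : f 0 ≤ 0 := by
    have : y 0 ∈ K := fun i => hy0 i
    simp [hfdef, infDist_zero_of_mem this]
  have key : ∀ x ∈ Icc (0:ℝ) T, f x ≤ gronwallBound 0 L 0 (x - 0) := by
    refine le_gronwallBound_of_liminf_deriv_right_le (f' := fun t => L * f t) hfcont ?_ hf0
      (fun x hx => by simp)
    intro x hx r hr
    -- the frequently (in fact eventually) estimate
    set A := M x with hAdef
    set p := P (y x) with hpdef2
    have hfx : f x = ‖y x - p‖ := hPdist (y x)
    have hfx0 : 0 ≤ f x := infDist_nonneg
    set c : ℝ := (r - L * f x) / 2 with hcdef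
    have hr' : L * f x < r := hr
    have hc0 : 0 < c := by simp only [hcdef]; linarith
    have hAL : ‖Φ A‖ ≤ L := hCL x ⟨hx.1, hx.2.le⟩
    -- little-o from the derivative
    have hderiv := hy x hx.1
    have hlo := hasDerivAt_iff_isLittleO.1 hderiv
    have hev1 : ∀ᶠ z in nhdsWithin x (Ioi x),
        ‖y z - y x - (z - x) • (A *ᵥ y x)‖ ≤ c * (z - x) := by
      filter_upwards [nhdsWithin_le_nhds (hlo.bound hc0), self_mem_nhdsWithin] with z hz hz'
      calc ‖y z - y x - (z - x) • (A *ᵥ y x)‖ ≤ c * ‖z - x‖ := hz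
        _ = c * (z - x) := by rw [Real.norm_eq_abs, abs_of_pos (sub_pos.2 hz')]
    have hev2 : ∀ᶠ z in nhdsWithin x (Ioi x), z - x ≤ 1 / (L + 1) := by
      have hpos : 0 < 1 / (L + 1) := by positivity
      have : ∀ᶠ z in nhds x, z - x ≤ 1 / (L + 1) := by
        filter_upwards [Metric.ball_mem_nhds x hpos] with z hz
        rw [Metric.mem_ball, Real.dist_eq] at hz
        linarith [(abs_lt.1 hz).2]
      exact nhdsWithin_le_nhds this
    refine (hev1.and (hev2.and self_mem_nhdsWithin)).mono ?_ |>.frequently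
    rintro z ⟨h1, h2, (h3 : x < z)⟩
    set h : ℝ := z - x with hhdef
    have hh0 : 0 < h := sub_pos.2 h3
    -- the comparison point in K
    set q : Fin d → ℝ := p + h • (A *ᵥ p) with hqdef
    have hqK : q ∈ K := by
      intro i
      have hp0 : ∀ j, 0 ≤ p j := hPK (y x)
      have hsum : A i i * p i ≤ (A *ᵥ p) i := by
        rw [Matrix.mulVec, dotProduct]
        rw [← Finset.add_sum_erase _ _ (Finset.mem_univ i)]
        have : 0 ≤ ∑ j ∈ Finset.univ.erase i, A i j * p j := by
          refine Finset.sum_nonneg fun j hj => ?_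
          exact mul_nonneg (hMoff x hx.1 i j (Finset.ne_of_mem_erase hj).symm) (hp0 j)
        linarith
      have hAii : -L ≤ A i i := by
        have := hdiag A i
        have := abs_le.1 (this.trans hAL)
        linarith [this.1]
      have : (0:ℝ) ≤ p i * (1 + h * A i i) := by
        refine mul_nonneg (hp0 i) ?_
        have h1 : h * A i i ≥ h * (-L) := by
          exact mul_le_mul_of_nonneg_left hAii hh0.le
        have h2 : h * L ≤ (1 / (L+1)) * L := by
          exact mul_le_mul_of_nonneg_right h2 hL0
        have h3 : (1 / (L+1)) * L < 1 := by
          rw [div_mul_eq_mul_div, one_mul, div_lt_one (by linarith)]; linarith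
        nlinarith
      calc (0:ℝ) ≤ p i * (1 + h * A i i) := this
        _ = p i + h * (A i i * p i) := by ring
        _ ≤ p i + h * (A *ᵥ p) i := by nlinarith [hsum]
        _ = q i := by simp [hqdef]
    -- the distance estimate
    have hfz : f z ≤ ‖y z - q‖ := by
      rw [hfdef]
      exact (infDist_le_dist_of_mem hqK).trans_eq (dist_eq_norm _ _)
    have hsplit : y z - q = (y z - y x - h • (A *ᵥ y x)) + ((y x - p) + h • (A *ᵥ (y x - p))) := by
      rw [hqdef]
      have : A *ᵥ (y x - p) = A *ᵥ y x - A *ᵥ p := by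
        rw [Matrix.mulVec_sub]
      rw [this]
      ext i
      simp only [Pi.add_apply, Pi.sub_apply, Pi.smul_apply, smul_eq_mul]
      ring
    have hAv : ‖A *ᵥ (y x - p)‖ ≤ L * ‖y x - p‖ := by
      calc ‖A *ᵥ (y x - p)‖ = ‖Φ A (y x - p)‖ := by rw [hΦapp]
        _ ≤ ‖Φ A‖ * ‖y x - p‖ := (Φ A).le_opNorm _
        _ ≤ L * ‖y x - p‖ := mul_le_mul_of_nonneg_right hAL (norm_nonneg _)
    have hest : f z ≤ c * h + f x + h * (L * f x) := by
      calc f z ≤ ‖y z - q‖ := hfz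
        _ ≤ ‖y z - y x - h • (A *ᵥ y x)‖ + ‖(y x - p) + h • (A *ᵥ (y x - p))‖ := by
            rw [hsplit]; exact norm_add_le _ _
        _ ≤ c * h + (‖y x - p‖ + ‖h • (A *ᵥ (y x - p))‖) :=
            add_le_add h1 (norm_add_le _ _)
        _ ≤ c * h + (‖y x - p‖ + h * (L * ‖y x - p‖)) := by
            refine add_le_add_right (add_le_add_right ?_ _) _
            rw [norm_smul, Real.norm_eq_abs, abs_of_pos hh0]
            exact mul_le_mul_of_nonneg_left hAv hh0.le
        _ = c * h + f x + h * (L * f x) := by rw [hfx]; ring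
    rw [inv_mul_lt_iff₀ hh0]
    have hlt : c + L * f x < r := by simp only [hcdef]; linarith [hr']
    nlinarith [hest, mul_pos hh0 (sub_pos.2 hlt)]
  -- conclude
  have hfT : f T ≤ 0 := by
    have := key T ⟨hT, le_refl T⟩
    rwa [gronwallBound_ε0_δ0] at this
  have : y T ∈ K := by
    rw [hKclosed.mem_iff_infDist_zero hKne]
    exact le_antisymm hfT infDist_nonneg
  exact this
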